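/- arXiv:1206.1564 — 4 statements merged into one kernel-verified Lean document; each statement's English description precedes it below -/
import Mathlib

section
/- The universal Novikov ring Λ, consisting of all functions λ : ℝ → ℚ such that for every c ∈ ℝ the set {ε ∈ ℝ | ε ≤ c ∧ λ(ε) ≠ 0} is finite, equipped with pointwise addition and the convolution product (λ·μ)(ε) = Σ_{a+b=ε} λ(a)·μ(b), is a field. -/
open HahnSeries Set

/-- The condition defining the universal Novikov ring: for every `c : ℝ`, only
finitely many exponents `ε ≤ c` carry a nonzero coefficient. -/
def NovikovCond (f : ℝ → ℚ) : Prop :=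
  ∀ c : ℝ, {ε : ℝ | ε ≤ c ∧ f ε ≠ 0}.Finite

lemma NovikovCond.isPWO {f : ℝ → ℚ} (h : NovikovCond f) :
    (Function.support f).IsPWO := by
  refine (Set.isWF_iff_no_descending_seq.mpr ?_).isPWO
  intro g hg hmem
  have hsub : Set.range g ⊆ {ε : ℝ | ε ≤ g 0 ∧ f ε ≠ 0} := by
    rintro _ ⟨n, rfl⟩
    exact ⟨hg.antitone (Nat.zero_le n), hmem n⟩
  exact Set.infinite_range_of_injective hg.injective ((h (g 0)).subset hsub)

abbrev NovCond (x : HahnSeries ℝ ℚ) : Prop := NovikovCond x.coeff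

lemma novCond_zero : NovCond 0 := fun c => by
  apply Set.Finite.subset (Set.finite_empty)
  rintro ε ⟨-, hne⟩; simp at hne

lemma novCond_single (a : ℝ) (r : ℚ) : NovCond (single a r) := fun c => by
  apply Set.Finite.subset (Set.finite_singleton a)
  rintro ε ⟨-, hne⟩
  by_contra hea
  exact hne (coeff_single_of_ne hea)

lemma novCond_one : NovCond 1 := by
  simpa using novCond_single 0 1

lemma novCond_add {x y : HahnSeries ℝ ℚ} (hx : NovCond x) (hy : NovCond y) :
    NovCond (x + y) := fun c => by
  apply Set.Finite.subset ((hx c).union (hy c))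
  rintro ε ⟨hc, hne⟩
  rw [coeff_add] at hne
  by_cases h : x.coeff ε = 0
  · exact Or.inr ⟨hc, fun h' => hne (by rw [h, h', add_zero])⟩
  · exact Or.inl ⟨hc, h⟩

lemma novCond_neg {x : HahnSeries ℝ ℚ} (hx : NovCond x) : NovCond (-x) := fun c => by
  apply Set.Finite.subset (hx c)
  rintro ε ⟨hc, hne⟩
  exact ⟨hc, fun h => hne (by simp [h])⟩

lemma novCond_mul {x y : HahnSeries ℝ ℚ} (hx : NovCond x) (hy : NovCond y) :
    NovCond (x * y) := by
  rcases eq_or_ne x 0 with rfl | hx0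
  · simpa using novCond_zero
  rcases eq_or_ne y 0 with rfl | hy0
  · simpa using novCond_zero
  intro c
  apply Set.Finite.subset (Set.Finite.add (hx (c - y.order)) (hy (c - x.order)))
  rintro ε ⟨hc, hne⟩
  obtain ⟨a, ha, b, hb, rfl⟩ := support_mul_subset (x := x) (y := y) hne
  have hc' : a + b ≤ c := hc
  have hax : x.order ≤ a := order_le_of_coeff_ne_zero ha
  have hby : y.order ≤ b := order_le_of_coeff_ne_zero hb
  exact Set.add_mem_add ⟨by linarith, ha⟩ ⟨by linarith, hb⟩

lemma novCond_pow {x : HahnSeries ℝ ℚ} (hx : NovCond x) (n : ℕ) : NovCond (x ^ n) := by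
  induction n with
  | zero => simpa using novCond_one
  | succ n ih => rw [pow_succ]; exact novCond_mul ih hx

lemma novCond_hsum_powers {z : HahnSeries ℝ ℚ} (hz : NovCond z) (h0 : 0 < z.orderTop) :
    NovCond (SummableFamily.powers z).hsum := by
  intro c
  have key : ∀ ε : ℝ, (SummableFamily.powers z).hsum.coeff ε ≠ 0 →
      ∃ n : ℕ, (z ^ n).coeff ε ≠ 0 := by
    intro ε hε
    by_contra hall
    push_neg at hall
    apply hε
    rw [SummableFamily.coeff_hsum]
    exact finsum_eq_zero_of_forall_eq_zero fun n => by
      simpa [SummableFamily.powers_toFun, h0] using hall n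
  rcases eq_or_ne z 0 with rfl | hz0
  · apply Set.Finite.subset (Set.finite_singleton 0)
    rintro ε ⟨hc, hne⟩
    obtain ⟨n, hn⟩ := key ε hne
    rcases Nat.eq_zero_or_pos n with rfl | hnpos
    · simp only [pow_zero, coeff_one] at hn
      by_contra hε0
      exact hn (if_neg hε0)
    · rw [zero_pow hnpos.ne', coeff_zero] at hn
      exact absurd rfl hn
  · have hδ : 0 < z.order := by
      have := order_eq_orderTop_of_ne_zero hz0
      rw [← this] at h0
      exact_mod_cast h0
    set δ := z.order with hδdef
    have hNfin : {n : ℕ | (n : ℝ) * δ ≤ c}.Finite := by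
      apply Set.Finite.subset (Set.finite_Iic ⌈c / δ⌉₊)
      intro n hn
      simp only [Set.mem_setOf_eq] at hn
      have h1 : (n : ℝ) ≤ c / δ := (le_div_iff₀ hδ).mpr hn
      have h2 : (n : ℝ) ≤ (⌈c / δ⌉₊ : ℝ) := h1.trans (Nat.le_ceil _)
      exact_mod_cast Set.mem_Iic.mpr (by exact_mod_cast h2)
    apply Set.Finite.subset (Set.Finite.biUnion hNfin
      (fun n _ => novCond_pow hz n c))
    rintro ε ⟨hc, hne⟩
    obtain ⟨n, hn⟩ := key ε hne
    have hord : (z ^ n).order ≤ ε := order_le_of_coeff_ne_zero hn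
    rw [order_pow, nsmul_eq_mul] at hord
    exact Set.mem_biUnion (show (n : ℝ) * δ ≤ c from hord.trans hc) ⟨hc, hn⟩

lemma novCond_inv {x : HahnSeries ℝ ℚ} (hx : NovCond x) (hx0 : x ≠ 0) :
    ∃ y : HahnSeries ℝ ℚ, NovCond y ∧ x * y = 1 := by
  have hlr : x.leadingCoeff⁻¹ * x.leadingCoeff = 1 :=
    inv_mul_cancel₀ (leadingCoeff_ne_zero.mpr hx0)
  have h0 := unit_aux x hlr (-x.order) (neg_add_cancel x.order)
  set u : HahnSeries ℝ ℚ := single (-x.order) x.leadingCoeff⁻¹ with hu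
  set z : HahnSeries ℝ ℚ := 1 - u * x with hzdef
  refine ⟨u * (SummableFamily.powers z).hsum, ?_, ?_⟩
  · apply novCond_mul (novCond_single _ _)
    apply novCond_hsum_powers _ h0
    rw [hzdef, sub_eq_add_neg]
    exact novCond_add novCond_one (novCond_neg (novCond_mul (novCond_single _ _) hx))
  · have h := SummableFamily.one_sub_self_mul_hsum_powers h0
    have hux : u * x = 1 - z := by rw [hzdef]; ring
    calc x * (u * (SummableFamily.powers z).hsum)
        = (u * x) * (SummableFamily.powers z).hsum := by ring
      _ = (1 - z) * (SummableFamily.powers z).hsum := by rw [hux]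
      _ = 1 := h


/-- The universal Novikov ring `Λ`, as the set of coefficient functions `ℝ → ℚ`
satisfying the finiteness condition. -/
def Novikov : Type :=
  {f : ℝ → ℚ // NovikovCond f}

/-- The Novikov subring of the Hahn series ring. -/
noncomputable def NovSubring : Subring (HahnSeries ℝ ℚ) where
  carrier := {x | NovCond x}
  zero_mem' := novCond_zero
  one_mem' := novCond_one
  add_mem' := novCond_add
  neg_mem' := novCond_neg
  mul_mem' := novCond_mul

def novEquiv : Novikov ≃ NovSubring where
  toFun f := ⟨⟨f.1, by
      have := f.2.isPWO
      simpa [Function.support] using this⟩, f.2⟩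
  invFun x := ⟨x.1.coeff, x.2⟩
  left_inv f := rfl
  right_inv x := rfl

noncomputable instance : CommRing Novikov := novEquiv.commRing

lemma novikov_isField : IsField Novikov where
  exists_pair_ne := by
    refine ⟨novEquiv.symm 0, novEquiv.symm 1, fun h => ?_⟩
    have : (0 : NovSubring) = 1 := novEquiv.symm.injective h
    have h2 : ((0 : NovSubring) : HahnSeries ℝ ℚ) = 1 := by rw [this]; rfl
    simp at h2
  mul_comm := mul_comm
  mul_inv_cancel := by
    intro a ha
    have hea : (novEquiv a : HahnSeries ℝ ℚ) ≠ 0 := by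
      intro h
      apply ha
      have : novEquiv a = 0 := Subtype.ext h
      have := congrArg novEquiv.symm this
      rw [Equiv.symm_apply_apply] at this
      rw [this]
      rfl
    obtain ⟨y, hy, hxy⟩ := novCond_inv (novEquiv a).2 hea
    refine ⟨novEquiv.symm ⟨y, hy⟩, ?_⟩
    show novEquiv.symm (novEquiv a * novEquiv (novEquiv.symm ⟨y, hy⟩)) = novEquiv.symm 1
    congr 1
    rw [Equiv.apply_symm_apply]
    exact Subtype.ext hxy


/-- The universal Novikov ring `Λ`, equipped with pointwise addition and the
convolution product `(λ·μ)(ε) = Σ_{a+b=ε} λ(a)·μ(b)`, is a field. -/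
theorem novikov_is_field :
    ∃ F : Field Novikov,
      (∀ f g : Novikov, ∀ ε : ℝ, (F.add f g).val ε = f.val ε + g.val ε) ∧
      (∀ f g : Novikov, ∀ ε : ℝ,
        (F.mul f g).val ε = ∑ᶠ a : ℝ, f.val a * g.val (ε - a)) := by
  refine ⟨novikov_isField.toField, ?_, ?_⟩
  · intro f g ε
    rfl
  · intro f g ε
    have hfg : (novikov_isField.toField.mul f g).val ε
        = ((novEquiv f : HahnSeries ℝ ℚ) * (novEquiv g : HahnSeries ℝ ℚ)).coeff ε := rfl
    set x := (novEquiv f : HahnSeries ℝ ℚ) with hx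
    set y := (novEquiv g : HahnSeries ℝ ℚ) with hy
    have hfx : ∀ a, f.val a = x.coeff a := fun a => rfl
    have hgy : ∀ a, g.val a = y.coeff a := fun a => rfl
    rw [hfg, HahnSeries.coeff_mul]
    set s := Finset.antidiagonal x.isPWO_support y.isPWO_support ε with hs
    have hsub : (Function.support fun a => f.val a * g.val (ε - a)) ⊆
        ↑(s.image Prod.fst) := by
      intro a ha
      rw [Function.mem_support] at ha
      have h1 : x.coeff a ≠ 0 := fun h => ha (by rw [hfx, h, zero_mul])
      have h2 : y.coeff (ε - a) ≠ 0 := fun h => ha (by rw [hgy, h, mul_zero])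
      refine Finset.mem_coe.mpr (Finset.mem_image.mpr ⟨(a, ε - a), ?_, rfl⟩)
      rw [hs, Finset.mem_antidiagonal]
      exact ⟨h1, h2, by ring⟩
    rw [finsum_eq_finset_sum_of_support_subset _ hsub]
    have hinj : ∀ p ∈ s, ∀ q ∈ s, p.fst = q.fst → p = q := by
      intro ij hij kl hkl hfst
      rw [hs, Finset.mem_antidiagonal] at hij hkl
      have h1 := hij.2.2
      have h2 := hkl.2.2
      ext
      · exact hfst
      · rw [hfst] at h1; linarith
    rw [Finset.sum_image hinj]
    apply Finset.sum_congr rfl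
    intro ij hij
    rw [hs, Finset.mem_antidiagonal] at hij
    rw [hfx, hgy]
    congr 1
    rw [← hij.2.2]; ring_nf
end

section
/- There is no entire function f : ℂ → ℂ such that f(z) ≠ 0 for all z ∈ ℂ and the induced map from ℂ to the punctured plane {z : ℂ | z ≠ 0} (with its subspace topology) is proper, i.e. such that preimages of compact subsets of the punctured plane are compact. -/
open Set Metric Bornology

/-- The exterior of a closed ball in `ℂ` is connected. -/
lemma isPreconnected_exterior (R : ℝ) (hR : 0 ≤ R) :
    IsPreconnected {z : ℂ | R < ‖z‖} := by
  have h2 : (1 : Cardinal) < Module.rank ℝ ℂ := by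
    rw [Complex.rank_real_complex]; exact_mod_cast one_lt_two
  have hc : IsConnected ({0}ᶜ : Set ℂ) := isConnected_compl_singleton_of_one_lt_rank h2 0
  have hg : ContinuousOn (fun z : ℂ => (1 + R / ‖z‖) • z) ({0}ᶜ : Set ℂ) := by
    apply ContinuousOn.smul (f := fun z : ℂ => 1 + R / ‖z‖) (g := id) _ continuous_id.continuousOn
    exact continuousOn_const.add (continuousOn_const.div continuous_norm.continuousOn
      (fun z hz => by simpa [norm_eq_zero] using hz))
  have himg : (fun z : ℂ => (1 + R / ‖z‖) • z) '' ({0}ᶜ : Set ℂ) = {z : ℂ | R < ‖z‖} := by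
    ext w
    constructor
    · rintro ⟨z, hz, rfl⟩
      have hz' : 0 < ‖z‖ := norm_pos_iff.2 (by simpa using hz)
      have hpos : 0 ≤ 1 + R / ‖z‖ := by positivity
      simp only [mem_setOf_eq, norm_smul, Real.norm_eq_abs, abs_of_nonneg hpos]
      have ha : ‖z‖ ≠ 0 := hz'.ne'
      have : (1 + R / ‖z‖) * ‖z‖ = ‖z‖ + R := by field_simp [ha]
      rw [this]; linarith
    · intro hw
      have hw' : 0 < ‖w‖ := lt_of_le_of_lt hR hw
      have ht : (0 : ℝ) < 1 - R / ‖w‖ := by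
        rw [sub_pos, div_lt_one hw']; exact hw
      refine ⟨(1 - R / ‖w‖) • w, ?_, ?_⟩
      · simp only [mem_compl_iff, mem_singleton_iff, smul_eq_zero, not_or]
        constructor
        · exact_mod_cast (by exact_mod_cast ht.ne' : ((1 - R / ‖w‖ : ℝ) : ℂ) ≠ 0)
        · intro h; rw [h] at hw'; simp at hw'
      · have hn : ‖(1 - R / ‖w‖) • w‖ = ‖w‖ - R := by
          rw [norm_smul, Real.norm_eq_abs, abs_of_pos ht]
          have ha : ‖w‖ ≠ 0 := hw'.ne'
          field_simp [ha]
        show (1 + R / ‖(1 - R / ‖w‖) • w‖) • ((1 - R / ‖w‖) • w) = w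
        rw [hn, smul_smul]
        have hwlt : R < ‖w‖ := hw
        have hwR : ‖w‖ - R ≠ 0 := by
          have : (0:ℝ) < ‖w‖ - R := by linarith
          exact ne_of_gt this
        have ha : ‖w‖ ≠ 0 := hw'.ne'
        have : (1 + R / (‖w‖ - R)) * (1 - R / ‖w‖) = 1 := by
          field_simp [ha, hwR]
          ring
        rw [this, one_smul]
  rw [← himg]
  exact (hc.isPreconnected.image _ hg)

/-- There is no entire function `f : ℂ → ℂ` which is nowhere zero and such that
the induced map from `ℂ` to the punctured plane `{z : ℂ | z ≠ 0}` (with its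
subspace topology) is proper, i.e. preimages of compact subsets of the punctured
plane are compact.  (Geometrically: there is no proper holomorphic map — in
particular no branched covering — from the plane to the cylinder `ℝ × S¹ ≅ ℂ∖{0}`.) -/
theorem no_proper_holomorphic_plane_to_cylinder :
    ¬ ∃ f : ℂ → ℂ, Differentiable ℂ f ∧ (∀ z : ℂ, f z ≠ 0) ∧
      (∀ K : Set {w : ℂ // w ≠ 0}, IsCompact K →
        IsCompact (f ⁻¹' (Subtype.val '' K))) := by
  rintro ⟨f, hdiff, hne, hprop⟩
  -- f cannot be constant, by properness applied to a singleton
  have hconst_false : (∀ z : ℂ, f z = f 0) → False := by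
    intro hc
    have hK : IsCompact ({⟨f 0, hne 0⟩} : Set {w : ℂ // w ≠ 0}) := isCompact_singleton
    have h1 := hprop _ hK
    have h2 : f ⁻¹' (Subtype.val '' ({⟨f 0, hne 0⟩} : Set {w : ℂ // w ≠ 0})) = univ := by
      ext z; simp [hc z]
    rw [h2] at h1
    exact noncompact_univ ℂ h1
  -- hence f cannot be bounded (Liouville)
  have hbdd_false : IsBounded (range f) → False := fun hb =>
    hconst_false fun z => hdiff.apply_eq_apply_of_bounded hb z 0
  -- the closed annulus 1/2 ≤ ‖w‖ ≤ 2
  set A : Set ℂ := closedBall (0 : ℂ) 2 \ ball (0 : ℂ) (1 / 2) with hA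
  have hAcomp : IsCompact A := (isCompact_closedBall 0 2).diff isOpen_ball
  have hAne : A ⊆ {w : ℂ | w ≠ 0} := by
    intro w hw
    have : ¬ ‖w‖ < 1 / 2 := by simpa [mem_ball, dist_zero_right] using hw.2
    intro h; rw [h] at this; norm_num at this
  -- its preimage in the subtype is compact
  have hKcomp : IsCompact (Subtype.val ⁻¹' A : Set {w : ℂ // w ≠ 0}) := by
    have himg : (Subtype.val '' (Subtype.val ⁻¹' A : Set {w : ℂ // w ≠ 0})) = A := by
      rw [Set.image_preimage_eq_inter_range, Subtype.range_coe_subtype]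
      exact inter_eq_left.2 hAne
    rw [Subtype.isCompact_iff, himg]
    exact hAcomp
  have himage : (Subtype.val '' (Subtype.val ⁻¹' A : Set {w : ℂ // w ≠ 0})) = A := by
    rw [Set.image_preimage_eq_inter_range, Subtype.range_coe_subtype]
    exact inter_eq_left.2 hAne
  have hP : IsCompact (f ⁻¹' A) := by
    have := hprop _ hKcomp
    rwa [himage] at this
  -- so the preimage of the annulus is contained in some ball
  obtain ⟨R, hRsub⟩ := hP.isBounded.subset_closedBall 0
  set M : ℝ := max R 0 with hM
  have hM0 : (0 : ℝ) ≤ M := le_max_right _ _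
  -- outside this ball, ‖f z‖ avoids the interval [1/2, 2]
  set u : Set ℂ := {z | ‖f z‖ < 1 / 2} with hu
  set v : Set ℂ := {z | 2 < ‖f z‖} with hv
  have hopen_u : IsOpen u := isOpen_lt (continuous_norm.comp hdiff.continuous) continuous_const
  have hopen_v : IsOpen v := isOpen_lt continuous_const (continuous_norm.comp hdiff.continuous)
  have hdisj : Disjoint u v := by
    rw [Set.disjoint_left]; intro z hz1 hz2
    simp only [hu, hv, mem_setOf_eq] at hz1 hz2
    linarith
  have hsub : {z : ℂ | M < ‖z‖} ⊆ u ∪ v := by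
    intro z hz
    have hznot : z ∉ f ⁻¹' A := by
      intro h
      have := hRsub h
      rw [mem_closedBall, dist_zero_right] at this
      have : ‖z‖ ≤ M := this.trans (le_max_left _ _)
      exact absurd hz (not_lt.2 this)
    have : f z ∉ A := hznot
    rw [hA, mem_diff, not_and_or, not_not] at this
    rcases this with h | h
    · right
      rw [mem_closedBall, dist_zero_right, not_le] at h
      exact h
    · left
      rwa [mem_ball, dist_zero_right] at h
  -- by connectedness, one alternative holds on the whole exterior
  rcases (isPreconnected_exterior M hM0).subset_or_subset hopen_u hopen_v hdisj hsub with h | h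
  · -- ‖f‖ < 1/2 outside the ball: f is bounded, contradiction
    apply hbdd_false
    obtain ⟨C, hC⟩ := ((isCompact_closedBall (0 : ℂ) M).image hdiff.continuous).isBounded.subset_closedBall 0
    apply (isBounded_closedBall (x := (0:ℂ)) (r := max C (1/2))).subset
    rintro w ⟨z, rfl⟩
    rw [mem_closedBall, dist_zero_right]
    by_cases hz : ‖z‖ ≤ M
    · have : f z ∈ closedBall (0:ℂ) C := hC ⟨z, by simpa [mem_closedBall, dist_zero_right] using hz, rfl⟩
      rw [mem_closedBall, dist_zero_right] at this
      exact this.trans (le_max_left _ _)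
    · have : z ∈ u := h (by simpa using lt_of_not_ge hz)
      exact le_trans (le_of_lt this) (le_max_right _ _)
  · -- ‖f‖ > 2 outside the ball: 1/f is bounded entire, hence f constant, contradiction
    have hgdiff : Differentiable ℂ (fun z => (f z)⁻¹) := hdiff.inv hne
    have hgbdd : IsBounded (range fun z => (f z)⁻¹) := by
      obtain ⟨C, hC⟩ := ((isCompact_closedBall (0 : ℂ) M).image hgdiff.continuous).isBounded.subset_closedBall 0
      apply (isBounded_closedBall (x := (0:ℂ)) (r := max C (1/2))).subset
      rintro w ⟨z, rfl⟩
      rw [mem_closedBall, dist_zero_right]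
      by_cases hz : ‖z‖ ≤ M
      · have : (f z)⁻¹ ∈ closedBall (0:ℂ) C := hC ⟨z, by simpa [mem_closedBall, dist_zero_right] using hz, rfl⟩
        rw [mem_closedBall, dist_zero_right] at this
        exact this.trans (le_max_left _ _)
      · have hzv : z ∈ v := h (by simpa using lt_of_not_ge hz)
        have h2 : (2:ℝ) < ‖f z‖ := hzv
        have : ‖(f z)⁻¹‖ = ‖f z‖⁻¹ := norm_inv _
        rw [this]
        refine le_trans ?_ (le_max_right _ _)
        rw [inv_le_comm₀ (by linarith) (by norm_num)]
        linarith
    apply hconst_false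
    intro z
    have hgz := hgdiff.apply_eq_apply_of_bounded hgbdd z 0
    have := congrArg (·⁻¹) hgz
    simpa [inv_inv] using this
end

section
/- Let f : ℂ → ℂ be a function that is complex differentiable at every point z ≠ 0, satisfies f(z) ≠ 0 for every z ≠ 0, and is such that the induced self-map of the punctured plane {z : ℂ | z ≠ 0} (with its subspace topology) is proper (preimages of compact sets are compact). Then there exist c ∈ ℂ with c ≠ 0 and a nonzero integer n ∈ ℤ such that f(z) = c · zⁿ for every z ≠ 0 (zⁿ denoting the integer power). In particular, a degree-k unbranched holomorphic covering of the cylinder by itself is, up to automorphisms of the domain, of the form z ↦ c·z^k. -/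
open Filter Metric Set Function Bornology Topology

private lemma puncturedBall_isPreconnected {δ : ℝ} (hδ : 0 < δ) :
    IsPreconnected (Metric.ball (0:ℂ) δ \ {0}) := by
  have h : Metric.ball (0:ℂ) δ \ {0} = Complex.exp '' {w : ℂ | w.re < Real.log δ} := by
    ext z
    simp only [mem_diff, Metric.mem_ball, dist_zero_right, mem_singleton_iff, mem_image,
      mem_setOf_eq]
    constructor
    · rintro ⟨hz, hz0⟩
      refine ⟨Complex.log z, ?_, Complex.exp_log hz0⟩
      rw [Complex.log_re]
      exact (Real.lt_log_iff_exp_lt hδ).mpr (by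
        rwa [Real.exp_log (norm_pos_iff.mpr hz0)])
    · rintro ⟨w, hw, rfl⟩
      refine ⟨?_, Complex.exp_ne_zero w⟩
      rw [Complex.norm_exp]
      exact (Real.lt_log_iff_exp_lt hδ).mp hw
  rw [h]
  exact ((convex_halfSpace_re_lt (Real.log δ)).isPreconnected).image _
    Complex.continuous_exp.continuousOn

private lemma escape_lemma (f : ℂ → ℂ)
    (hproper : ∀ K : Set ℂ, IsCompact K → K ⊆ {z : ℂ | z ≠ 0} →
      IsCompact {z : ℂ | z ≠ 0 ∧ f z ∈ K})
    {K : Set ℂ} (hK : IsCompact K) (hKne : K ⊆ {z : ℂ | z ≠ 0}) :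
    ∃ δ > 0, ∀ z : ℂ, z ≠ 0 → ‖z‖ < δ → f z ∉ K := by
  have hS := hproper K hK hKne
  have h0 : (0:ℂ) ∈ {z : ℂ | z ≠ 0 ∧ f z ∈ K}ᶜ := fun h => h.1 rfl
  have hmem : {z : ℂ | z ≠ 0 ∧ f z ∈ K}ᶜ ∈ 𝓝 (0:ℂ) :=
    hS.isClosed.isOpen_compl.mem_nhds h0
  obtain ⟨δ, hδ, hball⟩ := Metric.mem_nhds_iff.mp hmem
  refine ⟨δ, hδ, fun z hz hzδ hfz => ?_⟩
  have : z ∈ Metric.ball (0:ℂ) δ := by simpa [dist_zero_right] using hzδ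
  exact hball this ⟨hz, hfz⟩

private lemma dichotomy_at_zero (f : ℂ → ℂ)
    (hcont : ∀ z : ℂ, z ≠ 0 → ContinuousAt f z)
    (hproper : ∀ K : Set ℂ, IsCompact K → K ⊆ {z : ℂ | z ≠ 0} →
      IsCompact {z : ℂ | z ≠ 0 ∧ f z ∈ K}) :
    Tendsto f (𝓝[≠] (0:ℂ)) (𝓝 0) ∨ Tendsto (fun z => ‖f z‖) (𝓝[≠] (0:ℂ)) atTop := by
  -- escape from the unit circle
  have hcirc : Metric.sphere (0:ℂ) 1 ⊆ {z : ℂ | z ≠ 0} := by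
    intro w hw
    simp only [mem_sphere_iff_norm, sub_zero] at hw
    simp only [mem_setOf_eq]
    intro h; rw [h] at hw; simp at hw
  obtain ⟨δ, hδ, hesc⟩ := escape_lemma f hproper (isCompact_sphere 0 1) hcirc
  have hne1 : ∀ z : ℂ, z ≠ 0 → ‖z‖ < δ → ‖f z‖ ≠ 1 := by
    intro z hz hzδ h1
    exact hesc z hz hzδ (by simpa [mem_sphere_iff_norm] using h1)
  -- base point
  set z₀ : ℂ := ((δ/2 : ℝ) : ℂ) with hz₀def
  have hz₀ne : z₀ ≠ 0 := by
    simp only [hz₀def, ne_eq, Complex.ofReal_eq_zero]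
    positivity
  have hz₀δ : ‖z₀‖ < δ := by
    simp only [hz₀def, Complex.norm_real, Real.norm_eq_abs, abs_of_pos (by positivity : (0:ℝ) < δ/2)]
    linarith
  have hz₀mem : z₀ ∈ Metric.ball (0:ℂ) δ \ {0} := by
    constructor
    · simpa [dist_zero_right] using hz₀δ
    · simpa using hz₀ne
  have hcontOn : ContinuousOn (fun z => ‖f z‖) (Metric.ball (0:ℂ) δ \ {0}) := by
    intro z hz
    have hz0 : z ≠ 0 := by simpa using hz.2
    exact ((hcont z hz0).norm).continuousWithinAt
  -- one-sidedness on the punctured ball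
  have main : (∀ z : ℂ, z ≠ 0 → ‖z‖ < δ → ‖f z‖ < 1) ∨
      (∀ z : ℂ, z ≠ 0 → ‖z‖ < δ → 1 < ‖f z‖) := by
    rcases lt_or_gt_of_ne (hne1 z₀ hz₀ne hz₀δ) with h₀ | h₀
    · left
      intro z hz hzδ
      by_contra hge
      push_neg at hge
      have hgt : 1 < ‖f z‖ := lt_of_le_of_ne hge (Ne.symm (hne1 z hz hzδ))
      have hzmem : z ∈ Metric.ball (0:ℂ) δ \ {0} := by
        constructor
        · simpa [dist_zero_right] using hzδ
        · simpa using hz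
      obtain ⟨x, hx, hfx⟩ := (puncturedBall_isPreconnected hδ).intermediate_value₂
        hz₀mem hzmem hcontOn continuousOn_const h₀.le hgt.le
      have hx0 : x ≠ 0 := by simpa using hx.2
      have hxδ : ‖x‖ < δ := by simpa [dist_zero_right] using hx.1
      exact hne1 x hx0 hxδ hfx
    · right
      intro z hz hzδ
      by_contra hge
      push_neg at hge
      have hlt : ‖f z‖ < 1 := lt_of_le_of_ne hge (hne1 z hz hzδ)
      have hzmem : z ∈ Metric.ball (0:ℂ) δ \ {0} := by
        constructor
        · simpa [dist_zero_right] using hzδ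
        · simpa using hz
      obtain ⟨x, hx, hfx⟩ := (puncturedBall_isPreconnected hδ).intermediate_value₂
        hzmem hz₀mem hcontOn continuousOn_const hlt.le h₀.le
      have hx0 : x ≠ 0 := by simpa using hx.2
      have hxδ : ‖x‖ < δ := by simpa [dist_zero_right] using hx.1
      exact hne1 x hx0 hxδ hfx
  rcases main with hsmall | hbig
  · left
    rw [Metric.tendsto_nhdsWithin_nhds]
    intro ε hε
    set a : ℝ := min ε 1 with hadef
    have ha : 0 < a := lt_min hε one_pos
    have hKc : IsCompact (Metric.closedBall (0:ℂ) 1 \ Metric.ball 0 a) :=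
      (isCompact_closedBall _ _).diff isOpen_ball
    have hKne : Metric.closedBall (0:ℂ) 1 \ Metric.ball 0 a ⊆ {z : ℂ | z ≠ 0} := by
      rintro w ⟨-, hw2⟩
      simp only [Metric.mem_ball, dist_zero_right, not_lt] at hw2
      simp only [mem_setOf_eq]
      intro h; rw [h] at hw2; simp at hw2; linarith
    obtain ⟨δ', hδ', hesc'⟩ := escape_lemma f hproper hKc hKne
    refine ⟨min δ δ', lt_min hδ hδ', fun {z} hz hzd => ?_⟩
    have hz0 : z ≠ 0 := hz
    rw [dist_zero_right] at hzd ⊢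
    have h1 : ‖f z‖ < 1 := hsmall z hz0 (lt_of_lt_of_le hzd (min_le_left _ _))
    have h2 : f z ∉ Metric.closedBall (0:ℂ) 1 \ Metric.ball 0 a :=
      hesc' z hz0 (lt_of_lt_of_le hzd (min_le_right _ _))
    have h3 : f z ∈ Metric.closedBall (0:ℂ) 1 := by
      simp only [Metric.mem_closedBall, dist_zero_right]; exact h1.le
    have h4 : f z ∈ Metric.ball (0:ℂ) a := by
      by_contra h
      exact h2 ⟨h3, h⟩
    simp only [Metric.mem_ball, dist_zero_right] at h4
    exact lt_of_lt_of_le h4 (min_le_left _ _)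
  · right
    rw [Filter.tendsto_atTop]
    intro b
    set b' : ℝ := max b 1 with hbdef
    have hKc : IsCompact (Metric.closedBall (0:ℂ) b' \ Metric.ball 0 1) :=
      (isCompact_closedBall _ _).diff isOpen_ball
    have hKne : Metric.closedBall (0:ℂ) b' \ Metric.ball 0 1 ⊆ {z : ℂ | z ≠ 0} := by
      rintro w ⟨-, hw2⟩
      simp only [Metric.mem_ball, dist_zero_right, not_lt] at hw2
      simp only [mem_setOf_eq]
      intro h; rw [h] at hw2; simp at hw2; linarith
    obtain ⟨δ', hδ', hesc'⟩ := escape_lemma f hproper hKc hKne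
    rw [eventually_nhdsWithin_iff]
    rw [Metric.eventually_nhds_iff]
    refine ⟨min δ δ', lt_min hδ hδ', fun {z} hzd hz => ?_⟩
    have hz0 : z ≠ 0 := hz
    rw [dist_zero_right] at hzd
    have h1 : 1 < ‖f z‖ := hbig z hz0 (lt_of_lt_of_le hzd (min_le_left _ _))
    have h2 : f z ∉ Metric.closedBall (0:ℂ) b' \ Metric.ball 0 1 :=
      hesc' z hz0 (lt_of_lt_of_le hzd (min_le_right _ _))
    have h4 : ¬ (‖f z‖ ≤ b') := by
      intro h
      exact h2 ⟨by simpa [dist_zero_right] using h, by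
        simp only [Metric.mem_ball, dist_zero_right, not_lt]; exact h1.le⟩
    push_neg at h4
    exact le_trans (le_max_left _ _) h4.le

private lemma extend_facts {g : ℂ → ℂ}
    (hd : ∀ z : ℂ, z ≠ 0 → DifferentiableAt ℂ g z)
    (hne : ∀ z : ℂ, z ≠ 0 → g z ≠ 0)
    (h0 : Tendsto g (𝓝[≠] (0:ℂ)) (𝓝 0)) :
    Differentiable ℂ (Function.update g 0 0) ∧
    ∃ (n : ℕ) (h : ℂ → ℂ), 0 < n ∧ AnalyticAt ℂ h 0 ∧ h 0 ≠ 0 ∧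
      ∀ᶠ z in 𝓝 (0:ℂ), Function.update g 0 0 z = z ^ n * h z := by
  set G := Function.update g 0 0 with hGdef
  have hGg : ∀ z : ℂ, z ≠ 0 → G z = g z := fun z hz => Function.update_of_ne hz _ _
  have hG0 : G 0 = 0 := Function.update_self _ _ _
  have hGdiff : ∀ z : ℂ, z ≠ 0 → DifferentiableAt ℂ G z := by
    intro z hz
    have hev : G =ᶠ[𝓝 z] g := by
      filter_upwards [isOpen_compl_singleton.mem_nhds hz] with w hw
      exact hGg w hw
    exact (hd z hz).congr_of_eventuallyEq hev
  have hGd : ∀ᶠ z in 𝓝[≠] (0:ℂ), DifferentiableAt ℂ G z := by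
    filter_upwards [self_mem_nhdsWithin] with z hz
    exact hGdiff z hz
  have hGc : ContinuousAt G 0 := by
    rw [ContinuousAt, hG0]
    have : Tendsto G (𝓝[≠] (0:ℂ) ⊔ pure 0) (𝓝 (0:ℂ)) := by
      rw [tendsto_sup]
      constructor
      · exact h0.congr' (by filter_upwards [self_mem_nhdsWithin] with z hz using (hGg z hz).symm)
      · simpa [hG0] using tendsto_pure_nhds G 0
    rwa [nhdsNE_sup_pure] at this
  have hGa : AnalyticAt ℂ G 0 :=
    Complex.analyticAt_of_differentiable_on_punctured_nhds_of_continuousAt hGd hGc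
  have hGall : Differentiable ℂ G := by
    intro z
    by_cases hz : z = 0
    · subst hz; exact hGa.differentiableAt
    · exact hGdiff z hz
  refine ⟨hGall, ?_⟩
  have hnot : ¬ ∀ᶠ z in 𝓝 (0:ℂ), G z = 0 := by
    intro h
    have h2 : ∀ᶠ z in 𝓝[≠] (0:ℂ), G z = 0 := h.filter_mono nhdsWithin_le_nhds
    obtain ⟨z, hz1, hz2⟩ := (h2.and self_mem_nhdsWithin).exists
    have hz2' : z ≠ 0 := hz2
    exact hne z hz2' (by rw [← hGg z hz2']; exact hz1)
  obtain ⟨n, h, hha, hh0, heq⟩ := hGa.exists_eventuallyEq_pow_smul_nonzero_iff.mpr hnot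
  have heq' : ∀ᶠ z in 𝓝 (0:ℂ), G z = z ^ n * h z := by
    filter_upwards [heq] with z hz
    simpa [smul_eq_mul] using hz
  have hn : 0 < n := by
    rcases n.eq_zero_or_pos with h' | h'
    swap
    · exact h'
    · exfalso
      have h00 := heq'.self_of_nhds
      rw [hG0, h', pow_zero, one_mul] at h00
      exact hh0 h00.symm
  exact ⟨n, h, hn, hha, hh0, heq'⟩

private lemma liouville_const_of_bounded_at_infty {G : ℂ → ℂ} (hd : Differentiable ℂ G)
    {C R : ℝ} (hb : ∀ w : ℂ, R < ‖w‖ → ‖G w‖ ≤ C) : ∀ z : ℂ, G z = G 0 := by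
  have hbd : IsBounded (range G) := by
    have h1 : IsBounded (G '' Metric.closedBall 0 (max R 0 + 1)) :=
      ((isCompact_closedBall _ _).image_of_continuousOn
        hd.continuous.continuousOn).isBounded
    refine (h1.union (isBounded_closedBall (x := (0:ℂ)) (r := C))).subset ?_
    rintro _ ⟨z, rfl⟩
    by_cases hz : ‖z‖ ≤ max R 0 + 1
    · exact Or.inl ⟨z, by simpa [dist_zero_right] using hz, rfl⟩
    · push_neg at hz
      refine Or.inr ?_
      have hR : R < ‖z‖ := lt_of_le_of_lt (by
        calc R ≤ max R 0 := le_max_left _ _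
        _ ≤ max R 0 + 1 := by linarith) hz
      simpa [dist_zero_right] using hb z hR
  exact fun z => hd.apply_eq_apply_of_bounded hbd z 0

private lemma no_double_zero {f : ℂ → ℂ}
    (hd : ∀ z : ℂ, z ≠ 0 → DifferentiableAt ℂ f z)
    (hne : ∀ z : ℂ, z ≠ 0 → f z ≠ 0)
    (h0 : Tendsto f (𝓝[≠] (0:ℂ)) (𝓝 0))
    (hinf : Tendsto (fun z : ℂ => f z⁻¹) (𝓝[≠] (0:ℂ)) (𝓝 0)) : False := by
  obtain ⟨hFd, -⟩ := extend_facts hd hne h0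
  set F := Function.update f 0 0 with hFdef
  have h1 : ∀ᶠ z in 𝓝[≠] (0:ℂ), ‖f z⁻¹‖ ≤ 1 := by
    have := hinf (Metric.closedBall_mem_nhds (0:ℂ) one_pos)
    filter_upwards [this] with z hz
    simpa [dist_zero_right] using hz
  rw [eventually_nhdsWithin_iff, Metric.eventually_nhds_iff] at h1
  obtain ⟨δ, hδ, hball⟩ := h1
  -- for large w, ‖f w‖ ≤ 1
  have hlarge : ∀ w : ℂ, δ⁻¹ < ‖w‖ → ‖f w‖ ≤ 1 := by
    intro w hw
    have hw0 : w ≠ 0 := by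
      rintro rfl
      simp only [norm_zero] at hw
      exact (inv_pos.mpr hδ).not_gt hw
    have hwinv : dist w⁻¹ 0 < δ := by
      rw [dist_zero_right, norm_inv]
      have h1' : (0:ℝ) < ‖w‖ := norm_pos_iff.mpr hw0
      exact (inv_lt_comm₀ h1' hδ).mpr hw
    have := hball hwinv (by simpa using inv_ne_zero hw0)
    simpa [inv_inv] using this
  have hconst := liouville_const_of_bounded_at_infty hFd (C := 1) (R := δ⁻¹)
    (fun w hw => by
      have hw0 : w ≠ 0 := by
        rintro rfl
        simp only [norm_zero] at hw
        exact (inv_pos.mpr hδ).not_gt hw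
      rw [hFdef, Function.update_of_ne hw0]
      exact hlarge w hw)
  have hF1 : F 1 = F 0 := hconst 1
  rw [hFdef, Function.update_of_ne one_ne_zero, Function.update_self] at hF1
  exact hne 1 one_ne_zero hF1

private lemma poly_case {f : ℂ → ℂ}
    (hd : ∀ z : ℂ, z ≠ 0 → DifferentiableAt ℂ f z)
    (hne : ∀ z : ℂ, z ≠ 0 → f z ≠ 0)
    (h0 : Tendsto f (𝓝[≠] (0:ℂ)) (𝓝 0))
    (hinf : Tendsto (fun z : ℂ => ‖f z⁻¹‖) (𝓝[≠] (0:ℂ)) atTop) :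
    ∃ c : ℂ, c ≠ 0 ∧ ∃ n : ℕ, 0 < n ∧ ∀ z : ℂ, z ≠ 0 → f z = c * z ^ n := by
  obtain ⟨-, n, h, hn, hha, hh0, heq⟩ := extend_facts hd hne h0
  have heqf : ∀ᶠ z in 𝓝 (0:ℂ), z ≠ 0 → f z = z ^ n * h z := by
    filter_upwards [heq] with z hz hz0
    rwa [Function.update_of_ne hz0] at hz
  set k := fun z : ℂ => (f z⁻¹)⁻¹ with hkdef
  have hkd : ∀ z : ℂ, z ≠ 0 → DifferentiableAt ℂ k z := by
    intro z hz
    have h1 : DifferentiableAt ℂ (fun z : ℂ => f z⁻¹) z :=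
      (hd _ (inv_ne_zero hz)).comp z (differentiableAt_inv hz)
    exact h1.inv (hne _ (inv_ne_zero hz))
  have hkne : ∀ z : ℂ, z ≠ 0 → k z ≠ 0 := fun z hz =>
    inv_ne_zero (hne _ (inv_ne_zero hz))
  have hk0 : Tendsto k (𝓝[≠] (0:ℂ)) (𝓝 0) := by
    rw [tendsto_zero_iff_norm_tendsto_zero]
    have hrw : (fun z : ℂ => ‖k z‖) = fun z => ‖f z⁻¹‖⁻¹ := by
      funext z; simp [hkdef, norm_inv]
    rw [hrw]
    exact hinf.inv_tendsto_atTop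
  obtain ⟨-, m, u, hm, hua, hu0, hueq⟩ := extend_facts hkd hkne hk0
  set c1 : ℝ := ‖u 0‖ / 2 with hc1def
  set c2 : ℝ := ‖u 0‖ + 1 with hc2def
  have hu0' : (0:ℝ) < ‖u 0‖ := norm_pos_iff.mpr hu0
  have hc1 : (0:ℝ) < c1 := by rw [hc1def]; linarith
  have hubd : ∀ᶠ z in 𝓝 (0:ℂ), c1 < ‖u z‖ ∧ ‖u z‖ < c2 := by
    have hcont : Tendsto (fun z => ‖u z‖) (𝓝 (0:ℂ)) (𝓝 ‖u 0‖) := hua.continuousAt.norm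
    have hmem : Set.Ioo c1 c2 ∈ 𝓝 ‖u 0‖ :=
      Ioo_mem_nhds (by rw [hc1def]; linarith) (by rw [hc2def]; linarith)
    filter_upwards [hcont hmem] with z hz using ⟨hz.1, hz.2⟩
  have hcomb := hueq.and hubd
  rw [Metric.eventually_nhds_iff] at hcomb
  obtain ⟨ρ, hρ, hball⟩ := hcomb
  have hfw : ∀ w : ℂ, ρ⁻¹ < ‖w‖ →
      ‖f w‖ = ‖w‖ ^ m / ‖u w⁻¹‖ ∧ c1 < ‖u w⁻¹‖ ∧ ‖u w⁻¹‖ < c2 := by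
    intro w hw
    have hw0 : w ≠ 0 := by
      rintro rfl
      simp only [norm_zero] at hw
      exact (inv_pos.mpr hρ).not_gt hw
    have h1' : (0:ℝ) < ‖w‖ := norm_pos_iff.mpr hw0
    have hdist : dist w⁻¹ 0 < ρ := by
      rw [dist_zero_right, norm_inv]
      exact (inv_lt_comm₀ h1' hρ).mpr hw
    obtain ⟨hk1, hub1, hub2⟩ := hball hdist
    rw [Function.update_of_ne (inv_ne_zero hw0)] at hk1
    rw [hkdef] at hk1
    simp only [inv_inv] at hk1
    -- hk1 : (f w)⁻¹ = (w⁻¹) ^ m * u w⁻¹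
    have hnorm : ‖f w‖⁻¹ = (‖w‖⁻¹) ^ m * ‖u w⁻¹‖ := by
      rw [← norm_inv, hk1, norm_mul, norm_pow, norm_inv]
    refine ⟨?_, hub1, hub2⟩
    rw [← inv_inv ‖f w‖, hnorm, inv_pow, mul_inv, inv_inv, ← div_eq_mul_inv]
  set G : ℂ → ℂ := fun z => if z = 0 then h 0 else f z / z ^ n with hGdef
  have hG0 : G 0 = h 0 := by simp [hGdef]
  have hGeq : G =ᶠ[𝓝 (0:ℂ)] h := by
    filter_upwards [heqf] with z hz
    by_cases hz0 : z = 0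
    · subst hz0; simp [hGdef]
    · have hz' := hz hz0
      simp only [hGdef, if_neg hz0]
      rw [hz', mul_comm, mul_div_assoc, div_self (pow_ne_zero _ hz0), mul_one]
  have hGd : Differentiable ℂ G := by
    intro z
    by_cases hz : z = 0
    · subst hz
      exact hha.differentiableAt.congr_of_eventuallyEq hGeq
    · have hev : G =ᶠ[𝓝 z] fun w => f w / w ^ n := by
        filter_upwards [isOpen_compl_singleton.mem_nhds hz] with w hw
        simp only [hGdef, if_neg (show w ≠ 0 from hw)]
      exact ((hd z hz).div (differentiableAt_pow n) (pow_ne_zero _ hz)).congr_of_eventuallyEq hev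
  have hGne0 : ∀ z, G z ≠ 0 := by
    intro z
    by_cases hz : z = 0
    · subst hz; simpa [hGdef] using hh0
    · simp only [hGdef, if_neg hz]
      exact div_ne_zero (hne z hz) (pow_ne_zero _ hz)
  set R : ℝ := max ρ⁻¹ 1 with hRdef
  have hGw_norm : ∀ w : ℂ, R < ‖w‖ →
      ‖G w‖ = ‖w‖ ^ m / ‖u w⁻¹‖ / ‖w‖ ^ n ∧ c1 < ‖u w⁻¹‖ ∧ ‖u w⁻¹‖ < c2 ∧ (1:ℝ) < ‖w‖ := by
    intro w hw
    have hw1 : (1:ℝ) < ‖w‖ := lt_of_le_of_lt (le_max_right _ _) hw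
    have hwρ : ρ⁻¹ < ‖w‖ := lt_of_le_of_lt (le_max_left _ _) hw
    have hw0 : w ≠ 0 := by
      rintro rfl; simp only [norm_zero] at hw1; linarith
    obtain ⟨hfeq, hb1, hb2⟩ := hfw w hwρ
    refine ⟨?_, hb1, hb2, hw1⟩
    simp only [hGdef, if_neg hw0]
    rw [norm_div, norm_pow, hfeq]
  have hconst : ∀ z, G z = G 0 := by
    rcases le_or_gt m n with hmn | hnm
    · refine liouville_const_of_bounded_at_infty hGd (C := 1/c1) (R := R) ?_
      intro w hw
      obtain ⟨hGw, hb1, hb2, hw1⟩ := hGw_norm w hw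
      have hA : (0:ℝ) < ‖w‖ := by linarith
      rw [hGw, div_div, div_le_div_iff₀ (mul_pos (hc1.trans hb1) (pow_pos hA n)) hc1]
      have hp : ‖w‖ ^ m ≤ ‖w‖ ^ n := pow_le_pow_right₀ hw1.le hmn
      nlinarith [pow_pos hA m, pow_pos hA n]
    · have hHd : Differentiable ℂ (fun z => (G z)⁻¹) := fun z => (hGd z).inv (hGne0 z)
      have hH : ∀ z, (G z)⁻¹ = (G 0)⁻¹ := by
        refine liouville_const_of_bounded_at_infty hHd (C := c2) (R := R) ?_
        intro w hw
        obtain ⟨hGw, hb1, hb2, hw1⟩ := hGw_norm w hw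
        have hA : (0:ℝ) < ‖w‖ := by linarith
        rw [norm_inv, hGw, div_div, inv_div, div_le_iff₀ (by positivity)]
        have hp : ‖w‖ ^ n ≤ ‖w‖ ^ m := pow_le_pow_right₀ hw1.le hnm.le
        nlinarith [pow_pos hA m, pow_pos hA n]
      intro z
      calc G z = ((G z)⁻¹)⁻¹ := (inv_inv _).symm
        _ = ((G 0)⁻¹)⁻¹ := by rw [hH z]
        _ = G 0 := inv_inv _
  refine ⟨h 0, hh0, n, hn, fun z hz => ?_⟩
  have hcz := hconst z
  rw [hG0] at hcz
  simp only [hGdef, if_neg hz] at hcz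
  rw [div_eq_iff (pow_ne_zero _ hz)] at hcz
  exact hcz

/-- Classification of proper holomorphic self-maps of the punctured plane
(equivalently, of the cylinder `ℝ × S¹`): if `f : ℂ → ℂ` is complex differentiable
and nonvanishing at every `z ≠ 0`, and the induced self-map of the punctured plane
`{z : ℂ | z ≠ 0}` (with its subspace topology) is proper — preimages of compact
subsets are compact — then `f(z) = c · zⁿ` on `ℂ ∖ {0}` for some `c ≠ 0` and some
nonzero integer `n`. -/
theorem proper_holomorphic_self_map_of_punctured_plane (f : ℂ → ℂ)
    (hdiff : ∀ z : ℂ, z ≠ 0 → DifferentiableAt ℂ f z)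
    (hne : ∀ z : ℂ, z ≠ 0 → f z ≠ 0)
    (hproper : ∀ K : Set ℂ, IsCompact K → K ⊆ {z : ℂ | z ≠ 0} →
      IsCompact {z : ℂ | z ≠ 0 ∧ f z ∈ K}) :
    ∃ c : ℂ, c ≠ 0 ∧ ∃ n : ℤ, n ≠ 0 ∧ ∀ z : ℂ, z ≠ 0 → f z = c * z ^ n := by
  have hcont : ∀ z : ℂ, z ≠ 0 → ContinuousAt f z := fun z hz => (hdiff z hz).continuousAt
  have hftd : ∀ z : ℂ, z ≠ 0 → DifferentiableAt ℂ (fun z : ℂ => f z⁻¹) z := fun z hz =>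
    (hdiff _ (inv_ne_zero hz)).comp z (differentiableAt_inv hz)
  have hftne : ∀ z : ℂ, z ≠ 0 → f z⁻¹ ≠ 0 := fun z hz => hne _ (inv_ne_zero hz)
  have hftproper : ∀ K : Set ℂ, IsCompact K → K ⊆ {z : ℂ | z ≠ 0} →
      IsCompact {z : ℂ | z ≠ 0 ∧ f z⁻¹ ∈ K} := by
    intro K hK hKne
    have hset : {z : ℂ | z ≠ 0 ∧ f z⁻¹ ∈ K} = Inv.inv '' {z : ℂ | z ≠ 0 ∧ f z ∈ K} := by
      ext w
      simp only [mem_image, mem_setOf_eq]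
      constructor
      · rintro ⟨hw, hfw⟩
        exact ⟨w⁻¹, ⟨inv_ne_zero hw, hfw⟩, inv_inv w⟩
      · rintro ⟨z, ⟨hz, hfz⟩, rfl⟩
        exact ⟨inv_ne_zero hz, by rwa [inv_inv]⟩
    rw [hset]
    exact (hproper K hK hKne).image_of_continuousOn
      (fun x hx => (continuousAt_inv₀ hx.1).continuousWithinAt)
  have dich1 := dichotomy_at_zero f hcont hproper
  have dich2 := dichotomy_at_zero (fun z : ℂ => f z⁻¹)
    (fun z hz => (hftd z hz).continuousAt) hftproper
  rcases dich1 with h0 | h0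
  · rcases dich2 with hi | hi
    · exact (no_double_zero hdiff hne h0 hi).elim
    · obtain ⟨c, hc, n, hn, hfeq⟩ := poly_case hdiff hne h0 hi
      exact ⟨c, hc, (n:ℤ), by exact_mod_cast hn.ne', fun z hz => by
        rw [zpow_natCast]; exact hfeq z hz⟩
  · have hgd : ∀ z : ℂ, z ≠ 0 → DifferentiableAt ℂ (fun z : ℂ => (f z)⁻¹) z :=
      fun z hz => (hdiff z hz).inv (hne z hz)
    have hgne : ∀ z : ℂ, z ≠ 0 → (f z)⁻¹ ≠ 0 := fun z hz => inv_ne_zero (hne z hz)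
    have hg0 : Tendsto (fun z : ℂ => (f z)⁻¹) (𝓝[≠] (0:ℂ)) (𝓝 0) := by
      rw [tendsto_zero_iff_norm_tendsto_zero]
      have hrw : (fun z : ℂ => ‖(f z)⁻¹‖) = fun z => ‖f z‖⁻¹ := funext fun z => norm_inv _
      rw [hrw]
      exact h0.inv_tendsto_atTop
    rcases dich2 with hi | hi
    · have hginf : Tendsto (fun z : ℂ => ‖(f z⁻¹)⁻¹‖) (𝓝[≠] (0:ℂ)) atTop := by
        have h1 : Tendsto (fun z : ℂ => ‖f z⁻¹‖) (𝓝[≠] (0:ℂ)) (𝓝[>] 0) := by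
          rw [tendsto_nhdsWithin_iff]
          constructor
          · simpa using hi.norm
          · filter_upwards [self_mem_nhdsWithin] with z hz
            exact norm_pos_iff.mpr (hftne z hz)
        have h2 := h1.inv_tendsto_nhdsGT_zero
        refine h2.congr fun z => ?_
        simp [norm_inv]
      obtain ⟨c, hc, n, hn, hfeq⟩ := poly_case hgd hgne hg0 hginf
      refine ⟨c⁻¹, inv_ne_zero hc, -(n:ℤ), by simpa using hn.ne', fun z hz => ?_⟩
      have hgz := hfeq z hz
      have hf : f z = (c * z ^ n)⁻¹ := by
        rw [← hgz, inv_inv]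
      rw [hf, mul_inv, zpow_neg, zpow_natCast]
    · exfalso
      have hgi : Tendsto (fun z : ℂ => ((f z⁻¹)⁻¹ : ℂ)) (𝓝[≠] (0:ℂ)) (𝓝 0) := by
        rw [tendsto_zero_iff_norm_tendsto_zero]
        have hrw : (fun z : ℂ => ‖(f z⁻¹)⁻¹‖) = fun z => ‖f z⁻¹‖⁻¹ :=
          funext fun z => norm_inv _
        rw [hrw]
        exact hi.inv_tendsto_atTop
      exact no_double_zero hgd hgne hg0 hgi
end

section
/- Let R be a commutative ring, K ∈ ℕ, F a polynomial in K variables over R (an element of MvPolynomial (Fin K) R), and g : Fin K → Fin K → R a symmetric matrix (g γ δ = g δ γ for all γ, δ). For indices α, β, γ set c(α, β, γ) := ∂_α ∂_β ∂_γ F, the iterated formal partial derivative of F. Assume F satisfies the WDVV equations: for all α₀, α₁, β₁, β_∞, Σ_{γ, δ} c(α₀, α₁, γ) · g γ δ · c(δ, β₁, β_∞) = Σ_{γ, δ} c(α₀, β₁, γ) · g γ δ · c(δ, α₁, β_∞). Define a product ⋆ on the free module over MvPolynomial (Fin K) R with basis (e_α)_{α : Fin K} by e_α ⋆ e_β :=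 Σ_{γ, δ} c(α, β, γ) · g γ δ · e_δ, extended bilinearly over MvPolynomial (Fin K) R. Then ⋆ is commutative and associative: e_α ⋆ e_β = e_β ⋆ e_α and (e_α ⋆ e_β) ⋆ e_μ = e_α ⋆ (e_β ⋆ e_μ) for all α, β, μ. -/
open MvPolynomial

/-- The triple formal partial derivative `∂_α ∂_β ∂_γ F` of a polynomial `F`. -/
noncomputable def tripleDeriv {R : Type*} [CommRing R] {K : ℕ} (F : MvPolynomial (Fin K) R)
    (α β γ : Fin K) : MvPolynomial (Fin K) R :=
  pderiv α (pderiv β (pderiv γ F))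

/-- The big quantum product on the free module over `MvPolynomial (Fin K) R` with
basis `(e_α)`, defined by `e_α ⋆ e_β = Σ_{γ,δ} (∂_α ∂_β ∂_γ F) · g γ δ · e_δ` and
extended bilinearly: `(v ⋆ w) δ = Σ_{α,β,γ} v_α · w_β · (∂_α ∂_β ∂_γ F) · g γ δ`. -/
noncomputable def wdvvProd {R : Type*} [CommRing R] {K : ℕ} (F : MvPolynomial (Fin K) R)
    (g : Fin K → Fin K → R) (v w : Fin K → MvPolynomial (Fin K) R) :
    Fin K → MvPolynomial (Fin K) R :=
  fun δ => ∑ α : Fin K, ∑ β : Fin K, ∑ γ : Fin K,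
    v α * w β * tripleDeriv F α β γ * C (g γ δ)

private lemma pderiv_comm' {R : Type*} [CommRing R] {K : ℕ} (i j : Fin K)
    (f : MvPolynomial (Fin K) R) :
    pderiv i (pderiv j f) = pderiv j (pderiv i f) := by
  induction f using MvPolynomial.induction_on' with
  | add f g hf hg => simp [hf, hg]
  | monomial s a =>
    rcases eq_or_ne i j with rfl | hij
    · rfl
    · have h1 : (s - Finsupp.single j 1 : Fin K →₀ ℕ) i = s i := by
        simp [Finsupp.tsub_apply, Finsupp.single_apply, Ne.symm hij]
      have h2 : (s - Finsupp.single i 1 : Fin K →₀ ℕ) j = s j := by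
        simp [Finsupp.tsub_apply, Finsupp.single_apply, hij]
      simp only [pderiv_monomial, h1, h2, tsub_right_comm]
      ring_nf

private lemma tripleDeriv_swap12 {R : Type*} [CommRing R] {K : ℕ} (F : MvPolynomial (Fin K) R)
    (α β γ : Fin K) : tripleDeriv F α β γ = tripleDeriv F β α γ := by
  simp only [tripleDeriv, pderiv_comm']

private lemma tripleDeriv_swap23 {R : Type*} [CommRing R] {K : ℕ} (F : MvPolynomial (Fin K) R)
    (α β γ : Fin K) : tripleDeriv F α β γ = tripleDeriv F α γ β := by
  simp only [tripleDeriv, pderiv_comm']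

private lemma wdvv_single_single {R : Type*} [CommRing R] {K : ℕ} (F : MvPolynomial (Fin K) R)
    (g : Fin K → Fin K → R) (α β δ : Fin K) :
    wdvvProd F g (Pi.single α 1) (Pi.single β 1) δ
      = ∑ γ : Fin K, tripleDeriv F α β γ * C (g γ δ) := by
  simp [wdvvProd, Pi.single_apply, ite_mul, Finset.sum_ite_eq', Finset.mul_sum]

private lemma wdvv_single_right {R : Type*} [CommRing R] {K : ℕ} (F : MvPolynomial (Fin K) R)
    (g : Fin K → Fin K → R) (v : Fin K → MvPolynomial (Fin K) R) (μ δ : Fin K) :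
    wdvvProd F g v (Pi.single μ 1) δ
      = ∑ a : Fin K, ∑ γ : Fin K, v a * tripleDeriv F a μ γ * C (g γ δ) := by
  simp [wdvvProd, Pi.single_apply, ite_mul, mul_ite, Finset.sum_ite_eq', Finset.mul_sum]

private lemma wdvv_single_left {R : Type*} [CommRing R] {K : ℕ} (F : MvPolynomial (Fin K) R)
    (g : Fin K → Fin K → R) (w : Fin K → MvPolynomial (Fin K) R) (α δ : Fin K) :
    wdvvProd F g (Pi.single α 1) w δ
      = ∑ b : Fin K, ∑ γ : Fin K, w b * tripleDeriv F α b γ * C (g γ δ) := by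
  simp [wdvvProd, Pi.single_apply, ite_mul, mul_ite, Finset.sum_ite_eq', Finset.mul_sum]

/-- If the potential `F` satisfies the WDVV equations with respect to a symmetric
pairing `g`, then the product `⋆` defined by its triple derivatives is commutative
and associative on basis vectors. -/
theorem wdvv_prod_comm_assoc {R : Type*} [CommRing R] {K : ℕ}
    (F : MvPolynomial (Fin K) R) (g : Fin K → Fin K → R)
    (hg : ∀ γ δ : Fin K, g γ δ = g δ γ)
    (hWDVV : ∀ α₀ α₁ β₁ β₂ : Fin K,
      ∑ γ : Fin K, ∑ δ : Fin K,
        tripleDeriv F α₀ α₁ γ * C (g γ δ) * tripleDeriv F δ β₁ β₂ =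
      ∑ γ : Fin K, ∑ δ : Fin K,
        tripleDeriv F α₀ β₁ γ * C (g γ δ) * tripleDeriv F δ α₁ β₂) :
    (∀ α β : Fin K,
      wdvvProd F g (Pi.single α 1) (Pi.single β 1) =
        wdvvProd F g (Pi.single β 1) (Pi.single α 1)) ∧
    (∀ α β μ : Fin K,
      wdvvProd F g (wdvvProd F g (Pi.single α 1) (Pi.single β 1)) (Pi.single μ 1) =
        wdvvProd F g (Pi.single α 1) (wdvvProd F g (Pi.single β 1) (Pi.single μ 1))) := by
  constructor
  · intro α β
    funext δ
    rw [wdvv_single_single, wdvv_single_single]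
    exact Finset.sum_congr rfl fun γ _ => by rw [tripleDeriv_swap12]
  · intro α β μ
    funext e
    rw [wdvv_single_right, wdvv_single_left]
    -- key pointwise identity derived from WDVV and symmetry of tripleDeriv
    have key : ∀ c : Fin K,
        (∑ γ₁ : Fin K, ∑ a : Fin K,
          tripleDeriv F α β γ₁ * C (g γ₁ a) * tripleDeriv F a μ c) =
        ∑ γ₂ : Fin K, ∑ b : Fin K,
          tripleDeriv F β μ γ₂ * C (g γ₂ b) * tripleDeriv F α b c := by
      intro c
      have hs : ∀ b : Fin K, tripleDeriv F α b c = tripleDeriv F b α c :=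
        fun b => tripleDeriv_swap12 F α b c
      conv_rhs => rw [show (∑ γ₂ : Fin K, ∑ b : Fin K,
          tripleDeriv F β μ γ₂ * C (g γ₂ b) * tripleDeriv F α b c) =
        ∑ γ₂ : Fin K, ∑ b : Fin K,
          tripleDeriv F β μ γ₂ * C (g γ₂ b) * tripleDeriv F b α c from
        Finset.sum_congr rfl fun _ _ => Finset.sum_congr rfl fun b _ => by rw [hs b]]
      rw [hWDVV β μ α c]
      exact Finset.sum_congr rfl fun γ _ => Finset.sum_congr rfl fun d _ => by
        rw [tripleDeriv_swap12 F β α]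
    calc
      ∑ a : Fin K, ∑ γ : Fin K,
          wdvvProd F g (Pi.single α 1) (Pi.single β 1) a * tripleDeriv F a μ γ * C (g γ e)
        = ∑ γ : Fin K, (∑ γ₁ : Fin K, ∑ a : Fin K,
            tripleDeriv F α β γ₁ * C (g γ₁ a) * tripleDeriv F a μ γ) * C (g γ e) := by
          rw [Finset.sum_comm]
          refine Finset.sum_congr rfl fun γ _ => ?_
          simp only [wdvv_single_single, Finset.sum_mul]
          rw [Finset.sum_comm]
      _ = ∑ γ : Fin K, (∑ γ₂ : Fin K, ∑ b : Fin K,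
            tripleDeriv F β μ γ₂ * C (g γ₂ b) * tripleDeriv F α b γ) * C (g γ e) := by
          exact Finset.sum_congr rfl fun γ _ => by rw [key γ]
      _ = ∑ b : Fin K, ∑ γ : Fin K,
            wdvvProd F g (Pi.single β 1) (Pi.single μ 1) b * tripleDeriv F α b γ * C (g γ e) := by
          rw [Finset.sum_comm]
          refine Finset.sum_congr rfl fun γ _ => ?_
          simp only [wdvv_single_single, Finset.sum_mul]
          rw [Finset.sum_comm]
end
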